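/- arXiv:1511.04264 — 2 statements merged into one kernel-verified Lean document; each statement's English description precedes it below -/
import Mathlib

section
/- For every integer p ≥ 1, ∑_{q=1}^∞ ( ∑_{(s_1,…,s_q) ∈ ℕ^q with s_1+⋯+s_q = p} θ(s_1)·θ(s_2)⋯θ(s_q) ) = 1 + 2·h(p), where for each q the inner sum runs over all q-tuples of nonnegative integers summing to p. -/
/-- The critical offspring distribution: θ(k) = 3·(2k−1)!! / (2^{k+1}·(k+2)!),
with (2k−1)!! read as 1 when k = 0 (natural subtraction gives 0!! = 1). -/
noncomputable def theta (k : ℕ) : ℝ :=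
  3 * (Nat.doubleFactorial (2 * k - 1) : ℝ) / (2 ^ (k + 1) * (Nat.factorial (k + 2) : ℝ))

/-- h(k) = 4^{−k}·binom(2k,k), with binom the central binomial coefficient. -/
noncomputable def hfun (k : ℕ) : ℝ := (Nat.choose (2 * k) k : ℝ) / 4 ^ k

lemma hfun_pos (k : ℕ) : 0 < hfun k := by
  apply div_pos
  · exact_mod_cast Nat.choose_pos (by omega)
  · positivity

lemma hrec (k : ℕ) : (2 * (k:ℝ) + 2) * hfun (k + 1) = (2 * k + 1) * hfun k := by
  have key := Nat.succ_mul_centralBinom_succ k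
  have keyR : ((k:ℝ) + 1) * (Nat.choose (2 * (k+1)) (k+1) : ℝ)
      = 2 * (2 * k + 1) * (Nat.choose (2 * k) k : ℝ) := by
    exact_mod_cast key
  unfold hfun
  have h4 : (4:ℝ) ^ (k+1) = 4 * 4 ^ k := by ring
  field_simp [h4]
  linear_combination (2 * (4:ℝ) ^ k) * keyR

lemma sym_trick (m : ℕ) (f : ℕ → ℝ) :
    ∑ k ∈ Finset.range (m+1), (k:ℝ) * (f k * f (m-k))
      = ∑ k ∈ Finset.range (m+1), ((m:ℝ) - k) * (f k * f (m-k)) := by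
  rw [← Finset.sum_range_reflect (fun k => (k:ℝ) * (f k * f (m-k))) (m+1)]
  apply Finset.sum_congr rfl
  intro j hj
  have hj' : j ≤ m := by simpa [Nat.lt_succ_iff] using hj
  simp only [Nat.add_sub_cancel]
  rw [Nat.sub_sub_self hj', Nat.cast_sub hj']
  ring

lemma Vone : ∀ n : ℕ, ∑ k ∈ Finset.range (n+1), hfun k * hfun (n-k) = 1 := by
  intro n
  induction n with
  | zero => norm_num [hfun]
  | succ n ih =>
    have key : ∀ m : ℕ, ∑ k ∈ Finset.range (m+1), (2*(k:ℝ)+1) * (hfun k * hfun (m-k))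
        = ((m:ℝ)+1) * ∑ k ∈ Finset.range (m+1), hfun k * hfun (m-k) := by
      intro m
      have e1 : ∑ k ∈ Finset.range (m+1), (2*((m:ℝ)-k)+1) * (hfun k * hfun (m-k))
          = ∑ k ∈ Finset.range (m+1), (2*(k:ℝ)+1) * (hfun k * hfun (m-k)) := by
        have hs := sym_trick m hfun
        have l1 : ∑ k ∈ Finset.range (m+1), (2*((m:ℝ)-k)+1) * (hfun k * hfun (m-k))
            = 2 * (∑ k ∈ Finset.range (m+1), ((m:ℝ)-k) * (hfun k * hfun (m-k)))
              + ∑ k ∈ Finset.range (m+1), (hfun k * hfun (m-k)) := by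
          rw [Finset.mul_sum, ← Finset.sum_add_distrib]
          apply Finset.sum_congr rfl; intros; ring
        have l2 : ∑ k ∈ Finset.range (m+1), (2*(k:ℝ)+1) * (hfun k * hfun (m-k))
            = 2 * (∑ k ∈ Finset.range (m+1), (k:ℝ) * (hfun k * hfun (m-k)))
              + ∑ k ∈ Finset.range (m+1), (hfun k * hfun (m-k)) := by
          rw [Finset.mul_sum, ← Finset.sum_add_distrib]
          apply Finset.sum_congr rfl; intros; ring
        rw [l1, l2, hs]
      have split : ∑ k ∈ Finset.range (m+1), ((2*(k:ℝ)+1) + (2*((m:ℝ)-k)+1)) * (hfun k * hfun (m-k))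
          = (∑ k ∈ Finset.range (m+1), (2*(k:ℝ)+1) * (hfun k * hfun (m-k)))
            + ∑ k ∈ Finset.range (m+1), (2*((m:ℝ)-k)+1) * (hfun k * hfun (m-k)) := by
        rw [← Finset.sum_add_distrib]; apply Finset.sum_congr rfl; intros; ring
      have h3 : ∑ k ∈ Finset.range (m+1), ((2*(k:ℝ)+1) + (2*((m:ℝ)-k)+1)) * (hfun k * hfun (m-k))
          = (2*(m:ℝ)+2) * ∑ k ∈ Finset.range (m+1), hfun k * hfun (m-k) := by
        rw [Finset.mul_sum]; apply Finset.sum_congr rfl; intros; ring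
      rw [e1] at split
      rw [h3] at split
      linarith [split]
    have hPQ : ∑ k ∈ Finset.range (n+1), (2*(k:ℝ)+1) * (hfun k * hfun (n-k))
        = ∑ j ∈ Finset.range (n+2), (2*(j:ℝ)) * (hfun j * hfun (n+1-j)) := by
      rw [Finset.sum_range_succ' (fun j => (2*(j:ℝ)) * (hfun j * hfun (n+1-j))) (n+1)]
      simp only [Nat.cast_zero, mul_zero, zero_mul, add_zero]
      apply Finset.sum_congr rfl
      intro k hk
      have hnk : n + 1 - (k + 1) = n - k := by omega
      rw [hnk]
      push_cast
      nlinarith [hrec k, hfun_pos (n - k)]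
    have keyQ : ∑ j ∈ Finset.range (n+2), (2*(j:ℝ)) * (hfun j * hfun (n+1-j))
        = ((n:ℝ)+2) * ∑ j ∈ Finset.range (n+2), hfun j * hfun (n+1-j)
          - ∑ j ∈ Finset.range (n+2), (hfun j * hfun (n+1-j)) := by
      have hk := key (n+1)
      push_cast at hk
      have l2 : ∑ j ∈ Finset.range (n+2), (2*(j:ℝ)+1) * (hfun j * hfun (n+1-j))
          = (∑ j ∈ Finset.range (n+2), (2*(j:ℝ)) * (hfun j * hfun (n+1-j)))
            + ∑ j ∈ Finset.range (n+2), (hfun j * hfun (n+1-j)) := by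
        rw [← Finset.sum_add_distrib]; apply Finset.sum_congr rfl; intros; ring
      rw [l2] at hk
      linarith [hk]
    have hn1 := key n
    rw [ih] at hn1
    show ∑ k ∈ Finset.range (n+2), hfun k * hfun (n+1-k) = 1
    have hfin : ((n:ℝ)+1) * ∑ j ∈ Finset.range (n+2), hfun j * hfun (n+1-j) = ((n:ℝ)+1) := by
      have := hPQ
      rw [hn1, keyQ] at this
      linarith [this]
    have hne : ((n:ℝ)+1) ≠ 0 := by positivity
    exact mul_left_cancel₀ hne (by rw [hfin]; ring)

lemma df_step (k : ℕ) :
    Nat.doubleFactorial (2*(k+1)-1) = (2*k+1) * Nat.doubleFactorial (2*k-1) := by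
  cases k with
  | zero => rfl
  | succ k =>
    have h1 : 2*(k+1+1)-1 = (2*k+1)+2 := by omega
    have h2 : 2*(k+1)-1 = 2*k+1 := by omega
    rw [h1, h2, Nat.doubleFactorial]
    ring

lemma theta_succ (k : ℕ) : 2*((k:ℝ)+3) * theta (k+1) = (2*(k:ℝ)+1) * theta k := by
  unfold theta
  have hdf := df_step k
  have hdfR : (Nat.doubleFactorial (2*(k+1)-1) : ℝ) = (2*(k:ℝ)+1) * (Nat.doubleFactorial (2*k-1) : ℝ) := by
    rw [hdf]; push_cast; ring
  have hfact : (Nat.factorial (k+1+2) : ℝ) = ((k:ℝ)+3) * (Nat.factorial (k+2) : ℝ) := by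
    have : Nat.factorial (k+3) = (k+3) * Nat.factorial (k+2) := rfl
    rw [show k+1+2 = k+3 from rfl, this]; push_cast; ring
  rw [hdfR, hfact]
  have hp1 : ((2:ℝ)) ^ (k+1+1) = 2 * 2 ^ (k+1) := by ring
  rw [hp1]
  have hne1 : ((2:ℝ)) ^ (k+1) ≠ 0 := by positivity
  have hne2 : (Nat.factorial (k+2) : ℝ) ≠ 0 := by positivity
  have hne3 : ((k:ℝ)+3) ≠ 0 := by positivity
  field_simp

lemma theta_eq (k : ℕ) : 2*((k:ℝ)+1)*((k:ℝ)+2) * theta k = 3 * hfun k := by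
  induction k with
  | zero =>
    norm_num [theta, hfun, Nat.doubleFactorial, Nat.factorial]
  | succ k ih =>
    have A := theta_succ k
    have C := hrec k
    have e1 : theta (k+1) = (2*(k:ℝ)+1) * theta k / (2*((k:ℝ)+3)) := by
      field_simp; linarith [A]
    have e2 : hfun (k+1) = (2*(k:ℝ)+1) * hfun k / (2*(k:ℝ)+2) := by
      field_simp; linarith [C]
    push_cast
    rw [e1, e2]
    field_simp
    ring_nf
    nlinarith [ih, sq_nonneg ((k:ℝ))]

lemma hfun_zero : hfun 0 = 1 := by norm_num [hfun]

lemma u_h (k : ℕ) : hfun k / ((k:ℝ)+1) = 2*(hfun k - hfun (k+1)) := by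
  have C := hrec k
  have hk : ((k:ℝ)+1) ≠ 0 := by positivity
  field_simp
  linarith [C]

lemma theta_tel (k : ℕ) : theta k = hfun k/((k:ℝ)+1) - hfun (k+1)/((k:ℝ)+2) := by
  have A := theta_eq k
  have C := hrec k
  have hk1 : ((k:ℝ)+1) ≠ 0 := by positivity
  have hk2 : ((k:ℝ)+2) ≠ 0 := by positivity
  field_simp
  nlinarith [A, C]

lemma sum_theta (p : ℕ) : ∑ k ∈ Finset.range (p+1), theta k = 1 - hfun (p+1)/((p:ℝ)+2) := by
  have tel := Finset.sum_range_sub' (fun j => hfun j/((j:ℝ)+1)) (p+1)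
  have e : ∑ k ∈ Finset.range (p+1), theta k
      = ∑ i ∈ Finset.range (p+1), (hfun i/((i:ℝ)+1) - hfun (i+1)/(((i+1:ℕ):ℝ)+1)) :=
    Finset.sum_congr rfl fun k _ => by rw [theta_tel k]; push_cast; ring
  rw [e, tel, hfun_zero]
  push_cast
  ring

lemma shift_sum (g : ℕ → ℝ) (p : ℕ) :
    ∑ j ∈ Finset.range (p+2), g j * hfun (p+1-j)
      = (∑ k ∈ Finset.range (p+1), g (k+1) * hfun (p-k)) + g 0 * hfun (p+1) := by
  rw [Finset.sum_range_succ' (fun j => g j * hfun (p+1-j)) (p+1)]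
  simp [Nat.succ_sub_succ]

lemma conv_shift (p : ℕ) : ∑ k ∈ Finset.range (p+1), hfun (k+1) * hfun (p-k) = 1 - hfun (p+1) := by
  have h := shift_sum hfun p
  rw [Vone (p+1)] at h
  rw [hfun_zero] at h
  linarith [h]

lemma convW (p : ℕ) :
    ∑ k ∈ Finset.range (p+1), hfun k/((k:ℝ)+1) * hfun (p-k) = 2 * hfun (p+1) := by
  have e : ∀ k, hfun k/((k:ℝ)+1) * hfun (p-k)
      = 2 * (hfun k * hfun (p-k)) - 2 * (hfun (k+1) * hfun (p-k)) := by
    intro k; rw [u_h k]; ring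
  rw [Finset.sum_congr rfl fun k _ => e k, Finset.sum_sub_distrib, ← Finset.mul_sum, ← Finset.mul_sum,
    Vone p, conv_shift p]
  ring

lemma convC (p : ℕ) :
    ∑ k ∈ Finset.range (p+1), theta k * hfun (p-k) = 3 * hfun (p+1) - 2 * hfun (p+2) := by
  have hs := shift_sum (fun j => hfun j/((j:ℝ)+1)) p
  rw [convW (p+1)] at hs
  rw [show p+1+1 = p+2 from rfl] at hs
  simp only [Nat.cast_zero, hfun_zero] at hs
  have hsecond : ∑ k ∈ Finset.range (p+1), hfun (k+1)/(((k+1:ℕ):ℝ)+1) * hfun (p-k)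
      = 2 * hfun (p+2) - hfun (p+1) := by
    have : (1:ℝ)/(0+1) * hfun (p+1) = hfun (p+1) := by norm_num
    linarith [hs]
  have e : ∀ k, theta k * hfun (p-k)
      = hfun k/((k:ℝ)+1) * hfun (p-k) - hfun (k+1)/(((k+1:ℕ):ℝ)+1) * hfun (p-k) := by
    intro k
    rw [theta_tel k]
    push_cast
    ring
  rw [Finset.sum_congr rfl fun k _ => e k, Finset.sum_sub_distrib, convW p, hsecond]
  ring

lemma sum_adt_succ (f : ℕ → ℝ) (k n : ℕ) :
    ∑ s ∈ Finset.Nat.antidiagonalTuple (k+1) n, ∏ i, f (s i)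
      = ∑ ab ∈ Finset.HasAntidiagonal.antidiagonal n,
          f ab.1 * ∑ t ∈ Finset.Nat.antidiagonalTuple k ab.2, ∏ i, f (t i) := by
  have e : ∀ ab : ℕ × ℕ, f ab.1 * ∑ t ∈ Finset.Nat.antidiagonalTuple k ab.2, ∏ i, f (t i)
      = ∑ t ∈ Finset.Nat.antidiagonalTuple k ab.2, f ab.1 * ∏ i, f (t i) := by
    intro ab; rw [Finset.mul_sum]
  rw [Finset.sum_congr rfl fun ab _ => e ab,
    ← Finset.sum_sigma (Finset.HasAntidiagonal.antidiagonal n) (fun ab => Finset.Nat.antidiagonalTuple k ab.2)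
      (fun x => f x.1.1 * ∏ i, f (x.2 i))]
  apply Finset.sum_bij'
    (i := fun (s : Fin (k+1) → ℕ) _ => (⟨(s 0, ∑ i, Fin.tail s i), Fin.tail s⟩ :
        Σ _ : ℕ × ℕ, Fin k → ℕ))
    (j := fun (x : Σ _ : ℕ × ℕ, Fin k → ℕ) _ => Fin.cons x.1.1 x.2)
  · intro b hb
    simp only [Finset.mem_sigma, Finset.Nat.mem_antidiagonalTuple,
      Finset.HasAntidiagonal.mem_antidiagonal] at hb ⊢
    refine ⟨?_, trivial⟩
    rw [← hb, Fin.sum_univ_succ]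
    rfl
  · intro a ha
    simp only [Finset.mem_sigma, Finset.Nat.mem_antidiagonalTuple,
      Finset.HasAntidiagonal.mem_antidiagonal] at ha ⊢
    rw [Fin.sum_cons, ha.2]
    exact ha.1
  · intro b hb
    exact Fin.cons_self_tail b
  · rintro ⟨⟨a1, a2⟩, t⟩ ha
    simp only [Finset.mem_sigma, Finset.Nat.mem_antidiagonalTuple,
      Finset.HasAntidiagonal.mem_antidiagonal] at ha
    simp [Fin.tail_cons, Fin.cons_zero, ha.2]
  · intro b hb
    simp [Fin.prod_univ_succ, Fin.cons_zero, Fin.tail_cons, Fin.tail]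

lemma theta_nonneg (k : ℕ) : 0 ≤ theta k := by unfold theta; positivity

lemma theta_zero : theta 0 = 3/4 := by
  norm_num [theta, Nat.doubleFactorial, Nat.factorial]

lemma theta_h (k : ℕ) : theta k = 2*hfun k - 4*hfun (k+1) + 2*hfun (k+2) := by
  have h1 := theta_tel k
  have h2 := u_h k
  have h3 := u_h (k+1)
  push_cast at h3
  have e : ((k:ℝ)+1+1) = (k:ℝ)+2 := by ring
  rw [e] at h3
  linarith [h1, h2, h3]

lemma u_h' (p : ℕ) : hfun (p+1)/((p:ℝ)+2) = 2*(hfun (p+1) - hfun (p+2)) := by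
  have h3 := u_h (p+1)
  push_cast at h3
  have e : ((p:ℝ)+1+1) = (p:ℝ)+2 := by ring
  rw [e] at h3
  convert h3 using 2

noncomputable def Aq (q p : ℕ) : ℝ :=
  ∑ s ∈ Finset.Nat.antidiagonalTuple (q+1) p, ∏ i, theta (s i)

lemma Aq_nonneg (q p : ℕ) : 0 ≤ Aq q p :=
  Finset.sum_nonneg fun s _ => Finset.prod_nonneg fun i _ => theta_nonneg (s i)

lemma Aq_zero (p : ℕ) : Aq 0 p = theta p := by
  simp [Aq, Finset.Nat.antidiagonalTuple_one]

lemma Aq_rec (q p : ℕ) : Aq (q+1) p = ∑ k ∈ Finset.range (p+1), theta k * Aq q (p-k) := by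
  show (∑ s ∈ Finset.Nat.antidiagonalTuple (q+1+1) p, ∏ i, theta (s i)) = _
  rw [sum_adt_succ theta (q+1) p,
    Finset.Nat.sum_antidiagonal_eq_sum_range_succ_mk
      (fun ab => theta ab.1 * ∑ t ∈ Finset.Nat.antidiagonalTuple (q+1) ab.2, ∏ i, theta (t i)) p]
  rfl

lemma main_all : ∀ p : ℕ, HasSum (fun q => Aq q p) (1 + 2 * hfun p) := by
  intro p
  induction p using Nat.strong_induction_on with
  | _ p IH =>
  set b : ℕ → ℝ := fun q => Aq q p with hbdef
  set c : ℕ → ℝ := fun q => ∑ k ∈ Finset.Ico 1 (p+1), theta k * Aq q (p-k) with hcdef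
  set C : ℝ := ∑ k ∈ Finset.Ico 1 (p+1), theta k * (1 + 2*hfun (p-k)) with hCdef
  have hbrec : ∀ q, b (q+1) = theta 0 * b q + c q := by
    intro q
    show Aq (q+1) p = _
    rw [Aq_rec q p, Finset.range_eq_Ico,
      Finset.sum_eq_sum_Ico_succ_bot (by omega : 0 < p+1)
        (fun k => theta k * Aq q (p-k))]
    simp [hbdef, hcdef]
  have hC : HasSum c C := by
    apply hasSum_sum
    intro k hk
    rw [Finset.mem_Ico] at hk
    exact ((IH (p-k) (by omega)).mul_left (theta k))
  have hcnn : ∀ q, 0 ≤ c q :=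
    fun q => Finset.sum_nonneg fun k _ => mul_nonneg (theta_nonneg k) (Aq_nonneg q (p-k))
  have hCnn : 0 ≤ C := hC.nonneg hcnn
  have hbnn : ∀ q, 0 ≤ b q := fun q => Aq_nonneg q p
  have hbound : ∀ N, ∑ q ∈ Finset.range N, b q ≤ 4*(b 0 + C) := by
    intro N
    induction N with
    | zero =>
      simp only [Finset.range_zero, Finset.sum_empty]
      linarith [hbnn 0, hCnn]
    | succ N ihN =>
      rw [Finset.sum_range_succ' b N]
      have e1 : ∑ q ∈ Finset.range N, b (q+1)
          = theta 0 * (∑ q ∈ Finset.range N, b q) + ∑ q ∈ Finset.range N, c q := by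
        rw [Finset.mul_sum, ← Finset.sum_add_distrib]
        exact Finset.sum_congr rfl fun q _ => hbrec q
      have e2 : ∑ q ∈ Finset.range N, c q ≤ C :=
        sum_le_hasSum (Finset.range N) (fun q _ => hcnn q) hC
      rw [e1, theta_zero]
      have := hbnn 0
      linarith [ihN, e2]
  have hsummable : Summable b := summable_of_sum_range_le hbnn hbound
  have hbs : HasSum b (∑' q, b q) := hsummable.hasSum
  set L : ℝ := ∑' q, b q with hLdef
  have h1 : HasSum (fun q => b (q+1)) (L - b 0) := by
    refine (hasSum_nat_add_iff 1).mpr ?_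
    simpa using hbs
  have h2 : HasSum (fun q => b (q+1)) (theta 0 * L + C) := by
    have := (hbs.mul_left (theta 0)).add hC
    rw [show (fun q => b (q+1)) = fun q => theta 0 * b q + c q from funext hbrec]
    exact this
  have hL : L - b 0 = theta 0 * L + C := h1.unique h2
  have hb0 : b 0 = theta p := Aq_zero p
  -- compute C explicitly
  have hCval : C = (1 - hfun (p+1)/((p:ℝ)+2)) + 2*(3*hfun (p+1) - 2*hfun (p+2))
      - theta 0 * (1 + 2*hfun p) := by
    have split : ∑ k ∈ Finset.range (p+1), theta k * (1 + 2*hfun (p-k))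
        = theta 0 * (1 + 2*hfun (p-0)) + C := by
      rw [Finset.range_eq_Ico,
        Finset.sum_eq_sum_Ico_succ_bot (by omega : 0 < p+1)
          (fun k => theta k * (1 + 2*hfun (p-k)))]
    have expand : ∑ k ∈ Finset.range (p+1), theta k * (1 + 2*hfun (p-k))
        = (∑ k ∈ Finset.range (p+1), theta k)
          + 2 * ∑ k ∈ Finset.range (p+1), theta k * hfun (p-k) := by
      rw [Finset.mul_sum, ← Finset.sum_add_distrib]
      exact Finset.sum_congr rfl fun k _ => by ring
    rw [expand, sum_theta p, convC p] at split
    simp only [Nat.sub_zero] at split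
    linarith [split]
  have hLval : L = 1 + 2 * hfun p := by
    rw [theta_zero] at hL hCval
    rw [hb0] at hL
    have hth := theta_h p
    have huh := u_h' p
    linarith [hL, hCval, hth, huh]
  rw [← hLval]
  exact hbs

/-- For every p ≥ 1,
∑_{q=1}^∞ ( ∑_{s₁+⋯+s_q = p} θ(s₁)⋯θ(s_q) ) = 1 + 2·h(p),
where the inner sum is over q-tuples of nonnegative integers summing to p. -/
theorem green_function_identity (p : ℕ) (hp : 1 ≤ p) :
    HasSum
      (fun q : ℕ =>
        ∑ s ∈ Finset.Nat.antidiagonalTuple (q + 1) p, ∏ i, theta (s i))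
      (1 + 2 * hfun p) :=
  main_all p
end

section
/- For every real λ > 0, lim_{r→∞} (r+1)²·( (r+1)^{−2} − (r + 1/√(1 − exp(−λ·(r+1)^{−2})))^{−2} ) = 1 − (1 + λ^{−1/2})^{−2}, where the limit is over integers r → ∞. -/
open Filter Real Topology

/-- For every λ > 0,
(r+1)²·( (r+1)^{−2} − (r + 1/√(1 − exp(−λ·(r+1)^{−2})))^{−2} )
→ 1 − (1 + λ^{−1/2})^{−2} as the integer r → ∞. -/
theorem laplace_transform_limit (lam : ℝ) (hlam : 0 < lam) :
    Filter.Tendsto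
      (fun r : ℕ =>
        ((r : ℝ) + 1) ^ 2 *
          (((r : ℝ) + 1) ^ (-2 : ℤ) -
            ((r : ℝ) +
                1 / Real.sqrt (1 - Real.exp (-lam * ((r : ℝ) + 1) ^ (-2 : ℤ)))) ^ (-2 : ℤ)))
      Filter.atTop (nhds (1 - (1 + lam ^ (-(1 / 2) : ℝ)) ^ (-2 : ℤ))) := by
  set x : ℕ → ℝ := fun r => lam * ((r : ℝ) + 1) ^ (-2 : ℤ) with hxdef
  have hr1 : ∀ r : ℕ, (0:ℝ) < (r:ℝ) + 1 := fun r => by positivity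
  have hxpos : ∀ r : ℕ, 0 < x r := fun r => by
    have := hr1 r; positivity
  have he : ∀ r : ℕ, 0 < 1 - Real.exp (-lam * ((r : ℝ) + 1) ^ (-2 : ℤ)) := by
    intro r
    have : Real.exp (-lam * ((r : ℝ) + 1) ^ (-2 : ℤ)) < 1 := by
      rw [Real.exp_lt_one_iff]
      have := hxpos r
      simp only [hxdef] at this
      nlinarith
    linarith
  -- r+1 → atTop
  have hR : Tendsto (fun r : ℕ => (r : ℝ) + 1) atTop atTop :=
    tendsto_atTop_add_const_right _ 1 tendsto_natCast_atTop_atTop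
  have hR2 : Tendsto (fun r : ℕ => ((r : ℝ) + 1) ^ 2) atTop atTop :=
    (tendsto_pow_atTop (two_ne_zero)).comp hR
  -- x → 0 within (0,∞)
  have hx0 : Tendsto x atTop (𝓝[>] 0) := by
    apply tendsto_nhdsWithin_of_tendsto_nhds_of_eventually_within
    · have : Tendsto (fun r : ℕ => (((r : ℝ) + 1) ^ 2)⁻¹) atTop (𝓝 0) :=
        hR2.inv_tendsto_atTop
      have h := this.const_mul lam
      simp only [mul_zero] at h
      refine h.congr fun r => ?_
      simp [hxdef, zpow_neg, zpow_ofNat]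
    · exact Eventually.of_forall fun r => hxpos r
  -- slope limit: (1 - exp(-t))/t → 1 at 0
  have hd : HasDerivAt (fun t : ℝ => 1 - Real.exp (-t)) 1 0 := by
    have h1 : HasDerivAt (fun t : ℝ => Real.exp (-t)) (-1) 0 := by
      have := (Real.hasDerivAt_exp (-0)).comp 0 (hasDerivAt_neg 0)
      simpa [Function.comp_def] using this
    simpa [Pi.sub_def] using (hasDerivAt_const 0 (1:ℝ)).sub h1
  have hslope0 : Tendsto (fun t : ℝ => (1 - Real.exp (-t)) / t) (𝓝[>] 0) (𝓝 1) := by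
    have := hasDerivAt_iff_tendsto_slope.mp hd
    have h2 := this.mono_left (nhdsWithin_mono 0 (fun t ht => ne_of_gt ht))
    refine h2.congr' ?_
    filter_upwards [self_mem_nhdsWithin] with t ht
    simp [slope_def_field]
  have hslope : Tendsto (fun r : ℕ => (1 - Real.exp (-(x r))) / x r) atTop (𝓝 1) :=
    hslope0.comp hx0
  -- (r+1)^2 * (1 - exp(-x r)) → lam
  have hA : Tendsto (fun r : ℕ =>
      ((r : ℝ) + 1) ^ 2 * (1 - Real.exp (-lam * ((r : ℝ) + 1) ^ (-2 : ℤ)))) atTop (𝓝 lam) := by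
    have h := hslope.const_mul lam
    rw [mul_one] at h
    refine h.congr fun r => ?_
    have h1 : ((r:ℝ)+1) ≠ 0 := (hr1 r).ne'
    have hx' : x r = lam * (((r:ℝ)+1)^2)⁻¹ := by simp [hxdef, zpow_neg, zpow_ofNat]
    rw [hx']
    have h2 : -lam * ((r : ℝ) + 1) ^ (-2 : ℤ) = -(lam * (((r:ℝ)+1)^2)⁻¹) := by
      simp [zpow_neg, zpow_ofNat, neg_mul]
    rw [h2]
    field_simp
  -- (r+1) * sqrt(1 - exp(-x r)) → sqrt lam
  have hB : Tendsto (fun r : ℕ =>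
      ((r : ℝ) + 1) * Real.sqrt (1 - Real.exp (-lam * ((r : ℝ) + 1) ^ (-2 : ℤ)))) atTop
      (𝓝 (Real.sqrt lam)) := by
    have h := (Real.continuous_sqrt.tendsto lam).comp hA
    refine h.congr fun r => ?_
    simp only [Function.comp]
    rw [Real.sqrt_mul (sq_nonneg _), Real.sqrt_sq (hr1 r).le]
  have hsl : (0:ℝ) < Real.sqrt lam := Real.sqrt_pos.mpr hlam
  have hC : Tendsto (fun r : ℕ =>
      (((r : ℝ) + 1) * Real.sqrt (1 - Real.exp (-lam * ((r : ℝ) + 1) ^ (-2 : ℤ))))⁻¹) atTop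
      (𝓝 (Real.sqrt lam)⁻¹) := hB.inv₀ hsl.ne'
  -- the key ratio g r → 1 + lam^{-1/2}
  have hL : (1 : ℝ) + lam ^ (-(1 / 2) : ℝ) = 1 + (Real.sqrt lam)⁻¹ := by
    rw [Real.rpow_neg hlam.le, ← Real.sqrt_eq_rpow]
  have hg : Tendsto (fun r : ℕ =>
      ((r : ℝ) + 1 / Real.sqrt (1 - Real.exp (-lam * ((r : ℝ) + 1) ^ (-2 : ℤ)))) / ((r:ℝ)+1))
      atTop (𝓝 (1 + lam ^ (-(1 / 2) : ℝ))) := by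
    rw [hL]
    have hinv : Tendsto (fun r : ℕ => (((r:ℝ)+1))⁻¹) atTop (𝓝 0) := hR.inv_tendsto_atTop
    have h1 : Tendsto (fun r : ℕ => 1 - (((r:ℝ)+1))⁻¹) atTop (𝓝 1) := by
      have := (tendsto_const_nhds (x := (1:ℝ)) (f := atTop)).sub hinv
      simpa using this
    have h := h1.add hC
    refine h.congr fun r => ?_
    have h1' : ((r:ℝ)+1) ≠ 0 := (hr1 r).ne'
    have hs' : Real.sqrt (1 - Real.exp (-lam * ((r : ℝ) + 1) ^ (-2 : ℤ))) ≠ 0 :=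
      (Real.sqrt_pos.mpr (he r)).ne'
    set S := Real.sqrt (1 - Real.exp (-lam * ((r : ℝ) + 1) ^ (-2 : ℤ))) with hS
    have hsum : (r:ℝ) * S + S ≠ 0 := by
      have he' : (r:ℝ)*S + S = ((r:ℝ)+1)*S := by ring
      rw [he']; exact mul_ne_zero h1' hs'
    field_simp [hsum]
    ring
  -- conclude
  have hL0 : (0:ℝ) < 1 + lam ^ (-(1 / 2) : ℝ) := by
    rw [hL]; positivity
  have hfin : Tendsto (fun r : ℕ =>
      1 - (((r : ℝ) + 1 / Real.sqrt (1 - Real.exp (-lam * ((r : ℝ) + 1) ^ (-2 : ℤ)))) / ((r:ℝ)+1)) ^ (-2:ℤ))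
      atTop (𝓝 (1 - (1 + lam ^ (-(1 / 2) : ℝ)) ^ (-2 : ℤ))) := by
    have hsq := (hg.pow 2).inv₀ (by positivity)
    have h := (tendsto_const_nhds (x := (1:ℝ)) (f := atTop)).sub hsq
    have hzp : ∀ y : ℝ, y ^ (-2:ℤ) = (y ^ 2)⁻¹ := fun y => by
      simp [zpow_neg, zpow_ofNat]
    simp only [hzp]
    exact h
  refine hfin.congr fun r => ?_
  have h1' : ((r:ℝ)+1) ≠ 0 := (hr1 r).ne'
  have hs : 0 < Real.sqrt (1 - Real.exp (-lam * ((r : ℝ) + 1) ^ (-2 : ℤ))) :=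
    Real.sqrt_pos.mpr (he r)
  set A := (r : ℝ) + 1 / Real.sqrt (1 - Real.exp (-lam * ((r : ℝ) + 1) ^ (-2 : ℤ))) with hA'
  have hApos : 0 < A := by
    have : 0 < 1 / Real.sqrt (1 - Real.exp (-lam * ((r : ℝ) + 1) ^ (-2 : ℤ))) := by positivity
    have hr0 : (0:ℝ) ≤ (r:ℝ) := Nat.cast_nonneg r
    rw [hA']; linarith
  simp only [zpow_neg, zpow_ofNat]
  rw [div_pow]
  field_simp
end
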